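/- Let D be a bipartite tournament with partite sets V1 and V2. If D contains a directed cycle, then every tournament completion T of D contains at least two distinct augmented (2,1)-dicycles, i.e., at least two directed 3-cycles of T, each using at least one arc not in D and having exactly two vertices in one partite set and one in the other. -/

import Mathlib

/-- `f` gives the partite set (as a `Bool`) of each vertex; `A` is the arc relation.
`IsBipTournament f A` says `A` is an orientation of the complete bipartite graph with
(nonempty) partite sets `f ⁻¹ true` and `f ⁻¹ false`. -/
def IsBipTournament {V : Type*} (f : V → Bool) (A : V → V → Prop) : Prop :=
  (∃ v, f v = true) ∧ (∃ v, f v = false) ∧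
  (∀ u v, f u = f v → ¬ A u v) ∧ (∀ u v, f u ≠ f v → (A u v ↔ ¬ A v u))

/-- `T` is a tournament (on the whole vertex type). -/
def IsTournament {V : Type*} (T : V → V → Prop) : Prop :=
  (∀ v, ¬ T v v) ∧ ∀ u v, u ≠ v → (T u v ↔ ¬ T v u)

/-- `T` is a tournament completion of the digraph with arc relation `A`. -/
def IsCompletion {V : Type*} (A T : V → V → Prop) : Prop :=
  IsTournament T ∧ ∀ u v, A u v → T u v
/-- Cyclic successor in `Fin k`. -/
def cyc {k : ℕ} (i : Fin k) : Fin k :=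
  ⟨(i.val + 1) % k, Nat.mod_lt _ (lt_of_le_of_lt (Nat.zero_le _) i.isLt)⟩

/-- `c` lists the vertices of a directed cycle of length `k` in the digraph `A`. -/
def IsDicycle {V : Type*} (A : V → V → Prop) (k : ℕ) (c : Fin k → V) : Prop :=
  2 ≤ k ∧ Function.Injective c ∧ ∀ i, A (c i) (c (cyc i))

/-- The digraph `A` has no directed cycle. -/
def Acyclic {V : Type*} (A : V → V → Prop) : Prop :=
  ¬ ∃ (k : ℕ) (c : Fin k → V), IsDicycle A k c
/-- `c` is an augmented `(2,1)`-dicycle of the completion `T` of the bipartite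
tournament `(f, A)`: a directed 3-cycle of `T` using at least one arc not in `A`,
whose three vertices do not all lie in one partite set (hence exactly two in one
partite set and one in the other). -/
def Aug21 {V : Type*} (f : V → Bool) (A T : V → V → Prop) (c : Fin 3 → V) : Prop :=
  Function.Injective c ∧ (∀ i, T (c i) (c (i + 1))) ∧
  (∃ i, ¬ A (c i) (c (i + 1))) ∧ ¬ (f (c 0) = f (c 1) ∧ f (c 1) = f (c 2))


private lemma bool3 {p q r : Bool} (h1 : p ≠ q) (h2 : q ≠ r) : p = r := by
  revert p q r; decide

private lemma bool4 {p q r s : Bool} (h1 : p ≠ q) (h2 : q ≠ r) (h3 : r ≠ s) : p ≠ s := by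
  revert p q r s; decide

private lemma list_step {V : Type*} (f : V → Bool) (A : V → V → Prop)
    (h : IsBipTournament f A) :
    ∀ n (l : List V), l.length = n → 2 ≤ l.length → l.Nodup → l.Chain' A →
    (∀ hne : l ≠ [], A (l.getLast hne) (l.head hne)) →
    ∃ a b c d : V, a ≠ c ∧ b ≠ d ∧ A a b ∧ A b c ∧ A c d ∧ A d a := by
  intro n
  induction n using Nat.strong_induction_on with
  | _ n ih =>
    intro l hlen h2 hnd hch hcl
    obtain ⟨d1, d2, d3, d4⟩ := h
    rcases l with _ | ⟨x, _ | ⟨a, _ | ⟨b, _ | ⟨c, rest⟩⟩⟩⟩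
    · simp at h2
    · simp at h2
    · -- [x, a]
      simp only [List.Chain', List.isChain_cons_cons, List.isChain_singleton, and_true] at hch
      have hax := hcl (by simp)
      simp only [List.getLast, List.head] at hax
      have hfxa : f x ≠ f a := fun e => d3 x a e hch
      exact absurd hax ((d4 x a hfxa).mp hch)
    · -- [x, a, b]
      simp only [List.Chain', List.isChain_cons_cons, List.isChain_singleton, and_true] at hch
      have hbx := hcl (by simp)
      simp only [List.getLast, List.head] at hbx
      have h1 : f x ≠ f a := fun e => d3 x a e hch.1
      have h2' : f a ≠ f b := fun e => d3 a b e hch.2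
      have h3 : f b ≠ f x := fun e => d3 b x e hbx
      exact absurd (bool3 h1 h2') (Ne.symm h3)
    · -- x :: a :: b :: c :: rest
      simp only [List.Chain', List.isChain_cons_cons] at hch
      obtain ⟨hxa, hab, hbc, hchrest⟩ := hch
      have h1 : f x ≠ f a := fun e => d3 x a e hxa
      have h2' : f a ≠ f b := fun e => d3 a b e hab
      have h3 : f b ≠ f c := fun e => d3 b c e hbc
      have hfxc : f x ≠ f c := bool4 h1 h2' h3
      simp only [List.nodup_cons, List.mem_cons, not_or] at hnd
      by_cases hAcx : A c x
      · exact ⟨x, a, b, c, hnd.1.2.1, hnd.2.1.2.1, hxa, hab, hbc, hAcx⟩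
      · have hAxc : A x c := (d4 x c hfxc).mpr hAcx
        have hsub : (x :: c :: rest).Sublist (x :: a :: b :: c :: rest) := by
          refine List.Sublist.cons₂ x ?_
          exact ((c :: rest).sublist_cons_self b).trans ((b :: c :: rest).sublist_cons_self a)
        have hnd' : (x :: c :: rest).Nodup := by
          refine hsub.nodup ?_
          simp only [List.nodup_cons, List.mem_cons, not_or]
          exact ⟨hnd.1, hnd.2.1, hnd.2.2.1, hnd.2.2.2⟩
        refine ih (n - 2) (by omega) (x :: c :: rest) (by simp at hlen ⊢; omega)
          (by simp) hnd' ?_ ?_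
        · exact List.isChain_cons_cons.mpr ⟨hAxc, hchrest⟩
        · intro hne
          have := hcl (by simp)
          rcases rest with _ | ⟨y, ys⟩
          · simpa using this
          · simp only [List.getLast_cons, List.head] at this ⊢
            exact this

private lemma four_cycle {V : Type*} (f : V → Bool) (A : V → V → Prop)
    (h : IsBipTournament f A) (hcyc : ∃ (k : ℕ) (c : Fin k → V), IsDicycle A k c) :
    ∃ a b c d : V, a ≠ c ∧ b ≠ d ∧ A a b ∧ A b c ∧ A c d ∧ A d a := by
  obtain ⟨k, c, hk, hinj, harc⟩ := hcyc
  refine list_step f A h k (List.ofFn c) (by simp) (by simpa using hk)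
    (List.nodup_ofFn.mpr hinj) ?_ ?_
  · simp only [List.Chain', List.isChain_ofFn]
    intro i hi
    have := harc ⟨i, by omega⟩
    have hcy : cyc (⟨i, by omega⟩ : Fin k) = ⟨i + 1, hi⟩ := by
      simp [cyc, Nat.mod_eq_of_lt hi]
    rwa [hcy] at this
  · intro hne
    rw [List.getLast_ofFn, List.head_ofFn]
    have := harc ⟨k - 1, by omega⟩
    have hcy : cyc (⟨k - 1, by omega⟩ : Fin k) = ⟨0, by omega⟩ := by
      have : k - 1 + 1 = k := by omega
      simp [cyc, this]
    rwa [hcy] at this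

private lemma mkAug {V : Type*} (f : V → Bool) (A T : V → V → Prop) (u v w : V)
    (huv : u ≠ v) (hvw : v ≠ w) (huw : u ≠ w)
    (h01 : T u v) (h12 : T v w) (h20 : T w u)
    (hna : ¬ A u v ∨ ¬ A v w ∨ ¬ A w u)
    (hf : ¬ (f u = f v ∧ f v = f w)) : Aug21 f A T ![u, v, w] := by
  refine ⟨?_, ?_, ?_, by simpa using hf⟩
  · intro i j hij
    fin_cases i <;> fin_cases j <;> simp_all
  · intro i
    fin_cases i <;> simpa using by assumption
  · rcases hna with hna | hna | hna
    · exact ⟨0, by simpa using hna⟩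
    · exact ⟨1, by simpa using hna⟩
    · exact ⟨2, by simpa using hna⟩

private lemma range_ne {V : Type*} {x : V} (c1 c2 : Fin 3 → V)
    (hx : ∃ i, c1 i = x) (h1 : c2 0 ≠ x) (h2 : c2 1 ≠ x) (h3 : c2 2 ≠ x) :
    Set.range c1 ≠ Set.range c2 := by
  intro he
  obtain ⟨i, hi⟩ := hx
  have hx2 : x ∈ Set.range c2 := he ▸ ⟨i, hi⟩
  obtain ⟨j, hj⟩ := hx2
  fin_cases j
  exacts [h1 hj, h2 hj, h3 hj]

/-- If a bipartite tournament `D` contains a directed cycle, then every tournament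
completion `T` of `D` contains at least two distinct augmented `(2,1)`-dicycles. -/
theorem stmt_4 {V : Type*} [Fintype V] (f : V → Bool) (A : V → V → Prop)
    (h : IsBipTournament f A) (hcyc : ∃ (k : ℕ) (c : Fin k → V), IsDicycle A k c)
    (T : V → V → Prop) (hT : IsCompletion A T) :
    ∃ c1 c2 : Fin 3 → V, Aug21 f A T c1 ∧ Aug21 f A T c2 ∧
      Set.range c1 ≠ Set.range c2 := by
  obtain ⟨a, b, c, d, hac, hbd, hab, hbc, hcd, hda⟩ := four_cycle f A h hcyc
  obtain ⟨⟨hTir, hTtot⟩, hAT⟩ := hT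
  obtain ⟨d1, d2, d3, d4⟩ := h
  have fab : f a ≠ f b := fun e => d3 a b e hab
  have fbc : f b ≠ f c := fun e => d3 b c e hbc
  have fcd : f c ≠ f d := fun e => d3 c d e hcd
  have fda : f d ≠ f a := fun e => d3 d a e hda
  have fac : f a = f c := bool3 fab fbc
  have fbd : f b = f d := bool3 fbc fcd
  have nab : a ≠ b := fun e => fab (congrArg f e)
  have nbc : b ≠ c := fun e => fbc (congrArg f e)
  have ncd : c ≠ d := fun e => fcd (congrArg f e)
  have nda : d ≠ a := fun e => fda (congrArg f e)
  have Tab : T a b := hAT a b hab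
  have Tbc : T b c := hAT b c hbc
  have Tcd : T c d := hAT c d hcd
  have Tda : T d a := hAT d a hda
  by_cases h1 : T c a
  · by_cases h2 : T d b
    · refine ⟨![a, b, c], ![b, c, d], ?_, ?_, ?_⟩
      · exact mkAug f A T a b c nab nbc hac Tab Tbc h1
          (Or.inr (Or.inr (d3 c a fac.symm))) (fun e => fab e.1)
      · exact mkAug f A T b c d nbc ncd hbd Tbc Tcd h2
          (Or.inr (Or.inr (d3 d b fbd.symm))) (fun e => fbc e.1)
      · exact range_ne (x := a) _ _ ⟨0, by simp⟩ (by simpa using nab.symm)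
          (by simpa using hac.symm) (by simpa using nda)
    · have h2' : T b d := (hTtot b d hbd).mpr h2
      refine ⟨![a, b, c], ![b, d, a], ?_, ?_, ?_⟩
      · exact mkAug f A T a b c nab nbc hac Tab Tbc h1
          (Or.inr (Or.inr (d3 c a fac.symm))) (fun e => fab e.1)
      · exact mkAug f A T b d a hbd nda nab.symm h2' Tda Tab
          (Or.inl (d3 b d fbd)) (fun e => fda e.2)
      · exact range_ne (x := c) _ _ ⟨2, by simp⟩ (by simpa using nbc)
          (by simpa using ncd.symm) (by simpa using hac)
  · have h1' : T a c := (hTtot a c hac).mpr h1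
    by_cases h2 : T d b
    · refine ⟨![a, c, d], ![b, c, d], ?_, ?_, ?_⟩
      · exact mkAug f A T a c d hac ncd (fun e => nda e.symm) h1' Tcd Tda
          (Or.inl (d3 a c fac)) (fun e => fcd e.2)
      · exact mkAug f A T b c d nbc ncd hbd Tbc Tcd h2
          (Or.inr (Or.inr (d3 d b fbd.symm))) (fun e => fbc e.1)
      · exact range_ne (x := a) _ _ ⟨0, by simp⟩ (by simpa using nab.symm)
          (by simpa using hac.symm) (by simpa using nda)
    · have h2' : T b d := (hTtot b d hbd).mpr h2
      refine ⟨![a, c, d], ![b, d, a], ?_, ?_, ?_⟩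
      · exact mkAug f A T a c d hac ncd (fun e => nda e.symm) h1' Tcd Tda
          (Or.inl (d3 a c fac)) (fun e => fcd e.2)
      · exact mkAug f A T b d a hbd nda nab.symm h2' Tda Tab
          (Or.inl (d3 b d fbd)) (fun e => fda e.2)
      · exact range_ne (x := c) _ _ ⟨1, by simp⟩ (by simpa using nbc)
          (by simpa using ncd.symm) (by simpa using hac)
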